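/- Let a, b, c be real numbers with a > 0 and 4ac − b² > 0, let (aₙ, bₙ, cₙ) be the iterates of the rational Landen transformation starting from (a,b,c), and set eₙ = (aₙ − (1/2)√(4ac−b²), bₙ, cₙ − (1/2)√(4ac−b²)) ∈ ℝ³. Then the convergence is cubic: there exists a constant C > 0 such that ‖e_{n+1}‖ ≤ C‖eₙ‖³ for all n. -/

import Mathlib

open Filter Real

set_option maxHeartbeats 1000000

private lemma landen_aux_sq (u mm : ℝ) (hm : 0 ≤ mm) (h : u ^ 2 ≤ mm ^ 2) :
    -mm ≤ u ∧ u ≤ mm := by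
  constructor <;> nlinarith [sq_nonneg (u - mm), sq_nonneg (u + mm)]

private lemma landen_aux_T1 (x y z m : ℝ) (hm : 0 ≤ m) (hx1 : x ≤ m) (hx2 : -m ≤ x)
    (hy1 : y ≤ m) (hy2 : -m ≤ y) (hz1 : z ≤ m) (hz2 : -m ≤ z) :
    |x ^ 3 + 3 * x * y ^ 2 - (3 / 2) * (x - y) * z ^ 2| ≤ 7 * m ^ 3 := by
  rw [abs_le]
  constructor <;>
    nlinarith [mul_nonneg (sub_nonneg.mpr hx1) (sub_nonneg.mpr hy1),
      mul_nonneg (by linarith : (0:ℝ) ≤ m + x) (by linarith : (0:ℝ) ≤ m + y),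
      mul_nonneg (sub_nonneg.mpr hx1) (by linarith : (0:ℝ) ≤ m + y),
      mul_nonneg (by linarith : (0:ℝ) ≤ m + x) (sub_nonneg.mpr hy1),
      mul_nonneg (sub_nonneg.mpr hz1) (by linarith : (0:ℝ) ≤ m + z),
      sq_nonneg z, sq_nonneg x, sq_nonneg y, sq_nonneg (x - y), sq_nonneg (x + y),
      mul_nonneg (mul_nonneg hm hm) hm]

private lemma landen_aux_T3 (x y z m : ℝ) (hm : 0 ≤ m) (hx1 : x ≤ m) (hx2 : -m ≤ x)
    (hy1 : y ≤ m) (hy2 : -m ≤ y) (hz1 : z ≤ m) (hz2 : -m ≤ z) :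
    |z * (3 * (x - y) ^ 2 - z ^ 2)| ≤ 13 * m ^ 3 := by
  rw [abs_le]
  constructor <;>
    nlinarith [mul_nonneg (sub_nonneg.mpr hx1) (sub_nonneg.mpr hy1),
      mul_nonneg (by linarith : (0:ℝ) ≤ m + x) (by linarith : (0:ℝ) ≤ m + y),
      mul_nonneg (sub_nonneg.mpr hx1) (by linarith : (0:ℝ) ≤ m + y),
      mul_nonneg (by linarith : (0:ℝ) ≤ m + x) (sub_nonneg.mpr hy1),
      mul_nonneg (sub_nonneg.mpr hz1) (by linarith : (0:ℝ) ≤ m + z),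
      sq_nonneg (x - y), sq_nonneg z,
      mul_nonneg (mul_nonneg hm hm) hm]

private lemma landen_aux_sqrt (u v w : ℝ) :
    Real.sqrt (u ^ 2 + v ^ 2 + w ^ 2) ≤ |u| + |v| + |w| := by
  have h1 : u ^ 2 + v ^ 2 + w ^ 2 ≤ (|u| + |v| + |w|) ^ 2 := by
    nlinarith [abs_nonneg u, abs_nonneg v, abs_nonneg w, sq_abs u, sq_abs v, sq_abs w,
      mul_nonneg (abs_nonneg u) (abs_nonneg v), mul_nonneg (abs_nonneg u) (abs_nonneg w),
      mul_nonneg (abs_nonneg v) (abs_nonneg w)]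
  calc Real.sqrt (u ^ 2 + v ^ 2 + w ^ 2) ≤ Real.sqrt ((|u| + |v| + |w|) ^ 2) :=
        Real.sqrt_le_sqrt h1
    _ = |u| + |v| + |w| := Real.sqrt_sq (by positivity)


theorem landen_cubic_convergence (a b c : ℝ) (ha : 0 < a) (hD : 0 < 4 * a * c - b ^ 2)
    (A B C : ℕ → ℝ) (hA0 : A 0 = a) (hB0 : B 0 = b) (hC0 : C 0 = c)
    (hA : ∀ n, A (n + 1) = A n * ((A n + 3 * C n) ^ 2 - 3 * B n ^ 2) /
      ((3 * A n + C n) * (A n + 3 * C n) - B n ^ 2))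
    (hB : ∀ n, B (n + 1) = B n * (3 * (A n - C n) ^ 2 - B n ^ 2) /
      ((3 * A n + C n) * (A n + 3 * C n) - B n ^ 2))
    (hC : ∀ n, C (n + 1) = C n * ((3 * A n + C n) ^ 2 - 3 * B n ^ 2) /
      ((3 * A n + C n) * (A n + 3 * C n) - B n ^ 2))
    (e : ℕ → EuclideanSpace ℝ (Fin 3))
    (he : ∀ n, e n = ![A n - (1 / 2) * Real.sqrt (4 * a * c - b ^ 2), B n,
      C n - (1 / 2) * Real.sqrt (4 * a * c - b ^ 2)]) :
    ∃ K > 0, ∀ n, ‖e (n + 1)‖ ≤ K * ‖e n‖ ^ 3 := by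
  set l : ℝ := (1 / 2) * Real.sqrt (4 * a * c - b ^ 2) with hldef
  have hsq : Real.sqrt (4 * a * c - b ^ 2) ^ 2 = 4 * a * c - b ^ 2 := Real.sq_sqrt hD.le
  have hsqpos : 0 < Real.sqrt (4 * a * c - b ^ 2) := Real.sqrt_pos.mpr hD
  have hl : 0 < l := by rw [hldef]; positivity
  have hl2 : 4 * l ^ 2 = 4 * a * c - b ^ 2 := by rw [hldef]; nlinarith [hsq]
  -- invariance of 4AC - B^2
  have inv : ∀ n, 4 * A n * C n - B n ^ 2 = 4 * l ^ 2 := by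
    intro n
    induction n with
    | zero => rw [hA0, hB0, hC0, hl2]
    | succ n ih =>
      have hDval : (3 * A n + C n) * (A n + 3 * C n) - B n ^ 2
          = 3 * (A n + C n) ^ 2 + 4 * l ^ 2 := by linear_combination ih
      have hDpos : 0 < (3 * A n + C n) * (A n + 3 * C n) - B n ^ 2 := by
        rw [hDval]; positivity
      have hDne := ne_of_gt hDpos
      have key : 4 * A (n + 1) * C (n + 1) - B (n + 1) ^ 2
          = 4 * A n * C n - B n ^ 2 := by
        rw [hA n, hB n, hC n]
        obtain ⟨D, hDdef⟩ : ∃ D, (3 * A n + C n) * (A n + 3 * C n) - B n ^ 2 = D := ⟨_, rfl⟩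
        rw [hDdef] at hDne ⊢
        field_simp
        rw [← hDdef]
        ring
      rw [key]; exact ih
  refine ⟨27 / (4 * l ^ 2), by positivity, fun n => ?_⟩
  have cn := inv n
  obtain ⟨x, hAn⟩ : ∃ x, A n = l + x := ⟨A n - l, by ring⟩
  obtain ⟨y, hCn⟩ : ∃ y, C n = l + y := ⟨C n - l, by ring⟩
  rw [hAn, hCn] at cn
  have hDval : (3 * A n + C n) * (A n + 3 * C n) - B n ^ 2
      = 3 * (x + y + 2 * l) ^ 2 + 4 * l ^ 2 := by
    rw [hAn, hCn]; linear_combination cn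
  have hDpos : 0 < (3 * A n + C n) * (A n + 3 * C n) - B n ^ 2 := by
    rw [hDval]; positivity
  have hD4 : 4 * l ^ 2 ≤ (3 * A n + C n) * (A n + 3 * C n) - B n ^ 2 := by
    rw [hDval]; nlinarith [sq_nonneg (x + y + 2 * l)]
  have hDne := ne_of_gt hDpos
  -- exact cubic expressions for the next error
  have hp : A (n + 1) - l = (x ^ 3 + 3 * x * y ^ 2 - (3 / 2) * (x - y) * B n ^ 2) /
      ((3 * A n + C n) * (A n + 3 * C n) - B n ^ 2) := by
    rw [hA n, eq_div_iff hDne, sub_mul, div_mul_cancel₀ _ hDne, hAn, hCn]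
    linear_combination (2 * l + (3 / 2) * (x + y)) * cn
  have hq : C (n + 1) - l = (y ^ 3 + 3 * x ^ 2 * y + (3 / 2) * (x - y) * B n ^ 2) /
      ((3 * A n + C n) * (A n + 3 * C n) - B n ^ 2) := by
    rw [hC n, eq_div_iff hDne, sub_mul, div_mul_cancel₀ _ hDne, hAn, hCn]
    linear_combination (2 * l + (3 / 2) * (x + y)) * cn
  have hr : B (n + 1) = (B n * (3 * (x - y) ^ 2 - B n ^ 2)) /
      ((3 * A n + C n) * (A n + 3 * C n) - B n ^ 2) := by
    rw [hB n, hAn, hCn]; ring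
  -- norms
  have hnorm0 : ‖e n‖ = Real.sqrt (x ^ 2 + B n ^ 2 + y ^ 2) := by
    rw [EuclideanSpace.norm_eq, he n]
    simp [Fin.sum_univ_three, Real.norm_eq_abs, sq_abs, hAn, hCn]
  have hm0 : (0:ℝ) ≤ ‖e n‖ := norm_nonneg _
  have hm2 : x ^ 2 + B n ^ 2 + y ^ 2 = ‖e n‖ ^ 2 := by
    rw [hnorm0, Real.sq_sqrt (by positivity)]
  obtain ⟨m, hmdef⟩ : ∃ m', ‖e n‖ = m' := ⟨_, rfl⟩
  rw [hmdef] at hm0 hm2 ⊢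
  obtain ⟨hx2, hx1⟩ := landen_aux_sq x m hm0 (by nlinarith [sq_nonneg (B n), sq_nonneg y])
  obtain ⟨hy2, hy1⟩ := landen_aux_sq y m hm0 (by nlinarith [sq_nonneg (B n), sq_nonneg x])
  obtain ⟨hz2, hz1⟩ := landen_aux_sq (B n) m hm0 (by nlinarith [sq_nonneg x, sq_nonneg y])
  have hnorm1 : ‖e (n + 1)‖ = Real.sqrt ((A (n + 1) - l) ^ 2 + B (n + 1) ^ 2 +
      (C (n + 1) - l) ^ 2) := by
    rw [EuclideanSpace.norm_eq, he (n + 1)]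
    simp [Fin.sum_univ_three, Real.norm_eq_abs, sq_abs]
  -- numerator bounds
  have hT1 : |x ^ 3 + 3 * x * y ^ 2 - (3 / 2) * (x - y) * B n ^ 2| ≤ 7 * m ^ 3 :=
    landen_aux_T1 x y (B n) m hm0 hx1 hx2 hy1 hy2 hz1 hz2
  have hT2 : |y ^ 3 + 3 * x ^ 2 * y + (3 / 2) * (x - y) * B n ^ 2| ≤ 7 * m ^ 3 := by
    have := landen_aux_T1 y x (B n) m hm0 hy1 hy2 hx1 hx2 hz1 hz2
    have heq : y ^ 3 + 3 * x ^ 2 * y + (3 / 2) * (x - y) * B n ^ 2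
        = y ^ 3 + 3 * y * x ^ 2 - (3 / 2) * (y - x) * B n ^ 2 := by ring
    rw [heq]; exact this
  have hT3 : |B n * (3 * (x - y) ^ 2 - B n ^ 2)| ≤ 13 * m ^ 3 :=
    landen_aux_T3 x y (B n) m hm0 hx1 hx2 hy1 hy2 hz1 hz2
  -- put it together
  have hb1 : |A (n + 1) - l| ≤ 7 * m ^ 3 / (4 * l ^ 2) := by
    rw [hp, abs_div, abs_of_pos hDpos]
    exact div_le_div₀ (by positivity) hT1 (by positivity) hD4
  have hb2 : |C (n + 1) - l| ≤ 7 * m ^ 3 / (4 * l ^ 2) := by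
    rw [hq, abs_div, abs_of_pos hDpos]
    exact div_le_div₀ (by positivity) hT2 (by positivity) hD4
  have hb3 : |B (n + 1)| ≤ 13 * m ^ 3 / (4 * l ^ 2) := by
    rw [hr, abs_div, abs_of_pos hDpos]
    exact div_le_div₀ (by positivity) hT3 (by positivity) hD4
  calc ‖e (n + 1)‖ ≤ |A (n + 1) - l| + |B (n + 1)| + |C (n + 1) - l| := by
        rw [hnorm1]; exact landen_aux_sqrt _ _ _
    _ ≤ 7 * m ^ 3 / (4 * l ^ 2) + 13 * m ^ 3 / (4 * l ^ 2) + 7 * m ^ 3 / (4 * l ^ 2) := by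
        linarith
    _ = 27 / (4 * l ^ 2) * m ^ 3 := by ring
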